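/- Let γ > 0, c > 0 and α be real numbers, and set p = 1 + γ/2. Then the function r ↦ (∫_{r}^{∞} exp(-c·t^p) dt) · (1+r)^{-α} · exp(c·r^p) is integrable on the interval (1, ∞) if and only if α > 1 - γ/2. -/

import Mathlib

open MeasureTheory Filter Real

section ModelManifoldAux

open Set

lemma aux_tangent {p r t : ℝ} (hp : 1 ≤ p) (hr : 0 < r) (ht : r ≤ t) :
    r ^ p + p * r ^ (p - 1) * (t - r) ≤ t ^ p := by
  have h1 : (-1:ℝ) ≤ t / r - 1 := by
    have : 0 < t / r := div_pos (hr.trans_le ht) hr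
    linarith
  have h2 := one_add_mul_self_le_rpow_one_add h1 hp
  rw [add_sub_cancel] at h2
  have h3 : (t / r) ^ p = t ^ p / r ^ p := Real.div_rpow (hr.le.trans ht) hr.le p
  have h4 : (0:ℝ) < r ^ p := rpow_pos_of_pos hr p
  have h5 : r ^ (p - 1) * r = r ^ p := by
    have := (Real.rpow_add hr (p-1) 1).symm
    rw [sub_add_cancel, Real.rpow_one] at this
    linarith
  have h6 : t / r * r = t := div_mul_cancel₀ t hr.ne'
  have h7 := mul_le_mul_of_nonneg_right h2 h4.le
  rw [h3, div_mul_cancel₀ _ h4.ne'] at h7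
  have h8 : (t / r - 1) * r ^ p = (t - r) * r ^ (p - 1) := by
    rw [← h5]
    calc (t / r - 1) * (r ^ (p-1) * r) = (t / r * r - r) * r ^ (p-1) := by ring
    _ = (t - r) * r ^ (p-1) := by rw [h6]
  have h9 : p * ((t/r - 1) * r^p) = p * ((t-r) * r^(p-1)) := by rw [h8]
  nlinarith [h7, h9]

lemma aux_tangent' {p r t : ℝ} (hp : 1 ≤ p) (hr : 0 < r) (ht : r ≤ t) :
    t ^ p ≤ r ^ p + p * t ^ (p - 1) * (t - r) := by
  have ht0 : 0 < t := hr.trans_le ht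
  have h1 : (-1:ℝ) ≤ r / t - 1 := by
    have : 0 < r / t := div_pos hr ht0
    linarith
  have h2 := one_add_mul_self_le_rpow_one_add h1 hp
  rw [add_sub_cancel] at h2
  have h3 : (r / t) ^ p = r ^ p / t ^ p := Real.div_rpow hr.le ht0.le p
  have h4 : (0:ℝ) < t ^ p := rpow_pos_of_pos ht0 p
  have h5 : t ^ (p - 1) * t = t ^ p := by
    have := (Real.rpow_add ht0 (p-1) 1).symm
    rw [sub_add_cancel, Real.rpow_one] at this
    linarith
  have h6 : r / t * t = r := div_mul_cancel₀ r ht0.ne'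
  have h7 := mul_le_mul_of_nonneg_right h2 h4.le
  rw [h3, div_mul_cancel₀ _ h4.ne'] at h7
  have h8 : (r / t - 1) * t ^ p = (r - t) * t ^ (p - 1) := by
    rw [← h5]
    calc (r / t - 1) * (t ^ (p-1) * t) = (r / t * t - t) * t ^ (p-1) := by ring
    _ = (r - t) * t ^ (p-1) := by rw [h6]
  have h9 : p * ((r/t - 1) * t^p) = p * ((r-t) * t^(p-1)) := by rw [h8]
  nlinarith [h7, h9]

lemma aux_exp_integral {a r : ℝ} (ha : 0 < a) :
    ∫ t in Ioi r, Real.exp (-a * t) = Real.exp (-a * r) / a := by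
  have := integral_Ioi_of_hasDerivAt_of_tendsto' (a := r)
    (f := fun t => -Real.exp (-a * t) / a) (f' := fun t => Real.exp (-a * t))
    (m := 0) (fun x _ => ?_) (exp_neg_integrableOn_Ioi r ha) ?_
  · rw [this]; ring
  · have h : HasDerivAt (fun t : ℝ => -a * t) (-a) x := by
      simpa using (hasDerivAt_id x).const_mul (-a)
    have := ((h.exp).neg).div_const a
    convert this using 1
    · rfl
    · rfl
    · simp [ha.ne']
  · have : Tendsto (fun t : ℝ => Real.exp (-a * t)) atTop (nhds 0) :=
      tendsto_exp_atBot.comp (tendsto_id.const_mul_atTop_of_neg (by linarith))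
    simpa using (this.neg).div_const a

section
variable {c p : ℝ} (hc : 0 < c) (hp : 1 < p)
include hc hp

omit hc in
lemma aux_cont : Continuous fun t : ℝ => Real.exp (-c * t ^ p) :=
  Real.continuous_exp.comp (continuous_const.mul (Real.continuous_rpow_const (by linarith)))

lemma aux_int1 {r : ℝ} (hr : 1 ≤ r) :
    IntegrableOn (fun t => Real.exp (-c * t ^ p)) (Ioi r) := by
  have hr0 : 0 < r := lt_of_lt_of_le one_pos hr
  have ha : 0 < c * p * r ^ (p - 1) := by positivity
  refine Integrable.mono'
    ((exp_neg_integrableOn_Ioi r ha).const_mul (Real.exp (-c * r ^ p + c * p * r ^ (p-1) * r)))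
    ((aux_cont hp).aestronglyMeasurable.restrict) ?_
  filter_upwards [ae_restrict_mem measurableSet_Ioi] with t ht
  rw [Real.norm_eq_abs, abs_of_pos (Real.exp_pos _), ← Real.exp_add]
  apply Real.exp_le_exp.2
  have h := aux_tangent hp.le hr0 (le_of_lt ht)
  nlinarith [mul_le_mul_of_nonneg_left h hc.le]

lemma aux_int (r : ℝ) :
    IntegrableOn (fun t => Real.exp (-c * t ^ p)) (Ioi r) := by
  rcases le_or_gt 1 r with h | h
  · exact aux_int1 hc hp h
  · refine ((((aux_cont hp).integrableOn_Ioc (a := r) (b := 1))).union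
      (aux_int1 hc hp le_rfl)).mono_set fun t ht => ?_
    rcases le_or_gt t 1 with h2 | h2
    · exact Or.inl ⟨ht, h2⟩
    · exact Or.inr h2

lemma aux_anti :
    Antitone fun r : ℝ => ∫ t in Ioi r, Real.exp (-c * t ^ p) := by
  intro a b hab
  refine setIntegral_mono_set (aux_int hc hp a) ?_ ((Ioi_subset_Ioi hab).eventuallyLE)
  filter_upwards with t using (Real.exp_pos _).le

lemma aux_upper {r : ℝ} (hr : 1 ≤ r) :
    (∫ t in Ioi r, Real.exp (-c * t ^ p)) ≤
      Real.exp (-c * r ^ p) / (c * p * r ^ (p - 1)) := by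
  have hr0 : 0 < r := lt_of_lt_of_le one_pos hr
  have ha : 0 < c * p * r ^ (p - 1) := by positivity
  set a := c * p * r ^ (p - 1) with ha_def
  set K := Real.exp (-c * r ^ p + a * r) with hK
  have hKe : K * Real.exp (-a * r) = Real.exp (-c * r ^ p) := by
    rw [hK, ← Real.exp_add]; congr 1; ring
  calc (∫ t in Ioi r, Real.exp (-c * t ^ p))
      ≤ ∫ t in Ioi r, K * Real.exp (-a * t) := by
        refine setIntegral_mono_on (aux_int hc hp r)
          ((exp_neg_integrableOn_Ioi r ha).const_mul K) measurableSet_Ioi fun t ht => ?_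
        rw [← Real.exp_add]
        apply Real.exp_le_exp.2
        have h := aux_tangent hp.le hr0 (le_of_lt ht)
        rw [ha_def]
        nlinarith [mul_le_mul_of_nonneg_left h hc.le]
    _ = K * (Real.exp (-a * r) / a) := by rw [integral_const_mul, aux_exp_integral ha]
    _ = (K * Real.exp (-a * r)) / a := by ring
    _ = Real.exp (-c * r ^ p) / a := by rw [hKe]

lemma aux_lower {r : ℝ} (hr : 1 ≤ r) :
    Real.exp (-c * r ^ p) * Real.exp (-c * 2 ^ (p - 1)) * (r ^ (1 - p) / p) ≤
      ∫ t in Ioi r, Real.exp (-c * t ^ p) := by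
  have hr0 : 0 < r := lt_of_lt_of_le one_pos hr
  have hp0 : 0 < p := by linarith
  set δ := r ^ (1 - p) / p with hδ_def
  have hδ : 0 < δ := by positivity
  have hδ1 : δ ≤ 1 := by
    have h1 : r ^ (1 - p) ≤ 1 :=
      Real.rpow_le_one_of_one_le_of_nonpos hr (by linarith)
    rw [hδ_def, div_le_one hp0]; linarith
  have key : ∀ t ∈ Ioc r (r + δ),
      Real.exp (-c * r ^ p - c * 2 ^ (p - 1)) ≤ Real.exp (-c * t ^ p) := by
    intro t ht
    apply Real.exp_le_exp.2
    have htr : r ≤ t := ht.1.le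
    have ht2 : t ≤ 2 * r := by have := ht.2; linarith
    have h1 : t ^ (p - 1) ≤ 2 ^ (p - 1) * r ^ (p - 1) := by
      rw [← Real.mul_rpow (by norm_num) hr0.le]
      exact Real.rpow_le_rpow (by linarith) ht2 (by linarith)
    have h2 : t - r ≤ δ := by have := ht.2; linarith
    have h3 : p * t ^ (p - 1) * (t - r) ≤ p * (2 ^ (p - 1) * r ^ (p - 1)) * δ := by
      have ht1 : (0:ℝ) ≤ t ^ (p - 1) := Real.rpow_nonneg (by linarith) _
      have := mul_le_mul (mul_le_mul le_rfl h1 ht1 hp0.le) h2 (by linarith) (by positivity)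
      linarith
    have e1 : r ^ (p - 1) * r ^ (1 - p) = 1 := by
      rw [← Real.rpow_add hr0, show p - 1 + (1 - p) = 0 by ring, Real.rpow_zero]
    have h4 : p * (2 ^ (p - 1) * r ^ (p - 1)) * δ = 2 ^ (p - 1) := by
      rw [hδ_def]
      calc p * (2 ^ (p-1) * r ^ (p-1)) * (r ^ (1-p) / p)
          = 2 ^ (p-1) * (r ^ (p-1) * r ^ (1-p)) * (p / p) := by ring
        _ = 2 ^ (p-1) := by rw [e1, div_self hp0.ne']; ring
    have h5 : t ^ p ≤ r ^ p + 2 ^ (p - 1) := by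
      have := aux_tangent' hp.le hr0 htr
      linarith [h3, h4.le, h4.ge]
    nlinarith [mul_le_mul_of_nonneg_left h5 hc.le]
  have hInt : IntegrableOn (fun t => Real.exp (-c * t ^ p)) (Ioc r (r + δ)) :=
    (aux_int hc hp r).mono_set Ioc_subset_Ioi_self
  have hvol : (volume (Ioc r (r + δ))).toReal = δ := by
    rw [Real.volume_Ioc, add_sub_cancel_left, ENNReal.toReal_ofReal hδ.le]
  have h6 := setIntegral_ge_of_const_le_real measurableSet_Ioc
    (by rw [Real.volume_Ioc]; exact ENNReal.ofReal_ne_top) key hInt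
  rw [measureReal_def, hvol] at h6
  have h7 : (∫ t in Ioc r (r + δ), Real.exp (-c * t ^ p)) ≤
      ∫ t in Ioi r, Real.exp (-c * t ^ p) := by
    refine setIntegral_mono_set (aux_int hc hp r) ?_ (Ioc_subset_Ioi_self.eventuallyLE)
    filter_upwards with t using (Real.exp_pos _).le
  calc Real.exp (-c * r ^ p) * Real.exp (-c * 2 ^ (p - 1)) * δ
      = Real.exp (-c * r ^ p - c * 2 ^ (p - 1)) * δ := by
        rw [← Real.exp_add]; ring_nf
    _ ≤ ∫ t in Ioc r (r + δ), Real.exp (-c * t ^ p) := h6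
    _ ≤ _ := h7

end

end ModelManifoldAux

/-- Sharpness of the decay assumption on the model manifold: for `γ > 0`, `c > 0`,
`p = 1 + γ/2`, the function
`r ↦ (∫_{r}^{∞} exp(-c t^p) dt) · (1+r)^{-α} · exp(c r^p)`
is integrable on `(1, ∞)` if and only if `α > 1 - γ/2`. -/
theorem model_manifold_sharpness (γ c α : ℝ) (hγ : 0 < γ) (hc : 0 < c) :
    IntegrableOn
      (fun r : ℝ =>
        (∫ t in Set.Ioi r, Real.exp (-c * t ^ (1 + γ / 2))) * (1 + r) ^ (-α) *
          Real.exp (c * r ^ (1 + γ / 2)))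
      (Set.Ioi (1 : ℝ)) ↔ 1 - γ / 2 < α := by
  set p := 1 + γ / 2 with hp_def
  have hp : 1 < p := by rw [hp_def]; linarith
  have hp0 : 0 < p := by linarith
  -- bounds on (1+r)^(-α)
  have hub : ∀ r : ℝ, 1 ≤ r → (1 + r) ^ (-α) ≤ 2 ^ |α| * r ^ (-α) := by
    intro r hr
    have hr0 : (0:ℝ) < r := by linarith
    rcases le_or_gt 0 α with h | h
    · have h1 : (1 + r) ^ (-α) ≤ r ^ (-α) :=
        Real.rpow_le_rpow_of_nonpos hr0 (by linarith) (by linarith)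
      have h2 : (1:ℝ) ≤ 2 ^ |α| := Real.one_le_rpow (by norm_num) (abs_nonneg α)
      nlinarith [Real.rpow_nonneg hr0.le (-α)]
    · have habs : |α| = -α := abs_of_neg h
      have h1 : (1 + r) ^ (-α) ≤ (2 * r) ^ (-α) :=
        Real.rpow_le_rpow (by linarith) (by linarith) (by linarith)
      have h2 : (2 * r) ^ (-α) = 2 ^ (-α) * r ^ (-α) := Real.mul_rpow (by norm_num) hr0.le
      rw [habs]
      rw [h2] at h1
      exact h1
  have hlb : ∀ r : ℝ, 1 ≤ r → 2 ^ (-|α|) * r ^ (-α) ≤ (1 + r) ^ (-α) := by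
    intro r hr
    have hr0 : (0:ℝ) < r := by linarith
    rcases le_or_gt 0 α with h | h
    · have habs : |α| = α := abs_of_nonneg h
      have h1 : (2 * r) ^ (-α) ≤ (1 + r) ^ (-α) :=
        Real.rpow_le_rpow_of_nonpos (by linarith) (by linarith) (by linarith)
      have h2 : (2 * r) ^ (-α) = 2 ^ (-α) * r ^ (-α) := Real.mul_rpow (by norm_num) hr0.le
      rw [habs]
      rw [h2] at h1
      exact h1
    · have habs : -|α| = α := by rw [abs_of_neg h]; ring
      have h1 : r ^ (-α) ≤ (1 + r) ^ (-α) :=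
        Real.rpow_le_rpow hr0.le (by linarith) (by linarith)
      have h2 : (2:ℝ) ^ (-|α|) ≤ 1 := by
        rw [habs]; exact Real.rpow_le_one_of_one_le_of_nonpos (by norm_num) h.le
      nlinarith [Real.rpow_nonneg hr0.le (-α)]
  -- bounds on the Green kernel part
  have hG_ub : ∀ r : ℝ, 1 ≤ r →
      (∫ t in Set.Ioi r, Real.exp (-c * t ^ p)) * Real.exp (c * r ^ p) ≤
        1 / (c * p) * r ^ (1 - p) := by
    intro r hr
    have hr0 : (0:ℝ) < r := by linarith
    have e0 : Real.exp (-c * r ^ p) * Real.exp (c * r ^ p) = 1 := by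
      rw [← Real.exp_add]; ring_nf; exact Real.exp_zero
    have einv : r ^ (1 - p) = (r ^ (p - 1))⁻¹ := by
      rw [show (1:ℝ) - p = -(p - 1) by ring, Real.rpow_neg hr0.le]
    calc (∫ t in Set.Ioi r, Real.exp (-c * t ^ p)) * Real.exp (c * r ^ p)
        ≤ Real.exp (-c * r ^ p) / (c * p * r ^ (p - 1)) * Real.exp (c * r ^ p) :=
          mul_le_mul_of_nonneg_right (aux_upper hc hp hr) (Real.exp_pos _).le
      _ = (Real.exp (-c * r ^ p) * Real.exp (c * r ^ p)) * (c * p * r ^ (p - 1))⁻¹ := by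
          ring
      _ = (c * p * r ^ (p - 1))⁻¹ := by rw [e0]; ring
      _ = 1 / (c * p) * r ^ (1 - p) := by rw [einv, mul_inv, one_div]
  have hG_lb : ∀ r : ℝ, 1 ≤ r →
      Real.exp (-c * 2 ^ (p - 1)) / p * r ^ (1 - p) ≤
        (∫ t in Set.Ioi r, Real.exp (-c * t ^ p)) * Real.exp (c * r ^ p) := by
    intro r hr
    have e0 : Real.exp (-c * r ^ p) * Real.exp (c * r ^ p) = 1 := by
      rw [← Real.exp_add]; ring_nf; exact Real.exp_zero
    calc Real.exp (-c * 2 ^ (p - 1)) / p * r ^ (1 - p)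
        = (Real.exp (-c * r ^ p) * Real.exp (c * r ^ p)) *
            (Real.exp (-c * 2 ^ (p - 1)) / p * r ^ (1 - p)) := by rw [e0]; ring
      _ = (Real.exp (-c * r ^ p) * Real.exp (-c * 2 ^ (p - 1)) * (r ^ (1 - p) / p)) *
            Real.exp (c * r ^ p) := by ring
      _ ≤ (∫ t in Set.Ioi r, Real.exp (-c * t ^ p)) * Real.exp (c * r ^ p) :=
          mul_le_mul_of_nonneg_right (aux_lower hc hp hr) (Real.exp_pos _).le
  -- nonnegativity
  have hg_nonneg : ∀ r : ℝ, 0 ≤ ∫ t in Set.Ioi r, Real.exp (-c * t ^ p) := fun r =>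
    setIntegral_nonneg measurableSet_Ioi fun t _ => (Real.exp_pos _).le
  have hF_nonneg : ∀ r : ℝ, 1 ≤ r →
      0 ≤ (∫ t in Set.Ioi r, Real.exp (-c * t ^ p)) * (1 + r) ^ (-α) *
        Real.exp (c * r ^ p) := by
    intro r hr
    exact mul_nonneg (mul_nonneg (hg_nonneg r) (Real.rpow_nonneg (by linarith) _))
      (Real.exp_pos _).le
  -- measurability
  have hmeas : AEStronglyMeasurable
      (fun r : ℝ =>
        (∫ t in Set.Ioi r, Real.exp (-c * t ^ p)) * (1 + r) ^ (-α) *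
          Real.exp (c * r ^ p)) (volume.restrict (Set.Ioi 1)) := by
    have m1 : Measurable fun r : ℝ => ∫ t in Set.Ioi r, Real.exp (-c * t ^ p) :=
      (aux_anti hc hp).measurable
    have m2 : ContinuousOn (fun r : ℝ => (1 + r) ^ (-α)) (Set.Ioi 1) := by
      intro r hr
      have hne : (1:ℝ) + r ≠ 0 := by
        have : (1:ℝ) < r := hr
        positivity
      exact ((Real.continuousAt_rpow_const _ _ (Or.inl hne)).comp
        ((continuous_const.add continuous_id).continuousAt)).continuousWithinAt
    have m3 : Continuous fun r : ℝ => Real.exp (c * r ^ p) :=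
      Real.continuous_exp.comp (continuous_const.mul (Real.continuous_rpow_const hp0.le))
    exact ((m1.aestronglyMeasurable.restrict.mul
      (m2.aestronglyMeasurable measurableSet_Ioi)).mul m3.aestronglyMeasurable.restrict)
  constructor
  · -- integrable → α > 1 - γ/2
    intro h
    set c₁ := Real.exp (-c * 2 ^ (p - 1)) / p * 2 ^ (-|α|) with hc₁
    have hc₁pos : 0 < c₁ := by
      rw [hc₁]; positivity
    have hbound : ∀ r ∈ Set.Ioi (1:ℝ), c₁ * r ^ (1 - p + -α) ≤
        (∫ t in Set.Ioi r, Real.exp (-c * t ^ p)) * (1 + r) ^ (-α) *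
          Real.exp (c * r ^ p) := by
      intro r hr
      have hr1 : (1:ℝ) ≤ r := le_of_lt hr
      have hr0 : (0:ℝ) < r := by linarith [hr.out]
      have step : c₁ * r ^ (1 - p + -α) =
          (Real.exp (-c * 2 ^ (p - 1)) / p * r ^ (1 - p)) * (2 ^ (-|α|) * r ^ (-α)) := by
        rw [hc₁, Real.rpow_add hr0]; ring
      rw [step]
      calc (Real.exp (-c * 2 ^ (p - 1)) / p * r ^ (1 - p)) * (2 ^ (-|α|) * r ^ (-α))
          ≤ ((∫ t in Set.Ioi r, Real.exp (-c * t ^ p)) * Real.exp (c * r ^ p)) *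
              ((1 + r) ^ (-α)) := by
            refine mul_le_mul (hG_lb r hr1) (hlb r hr1) (by positivity) ?_
            exact mul_nonneg (hg_nonneg r) (Real.exp_pos _).le
        _ = (∫ t in Set.Ioi r, Real.exp (-c * t ^ p)) * (1 + r) ^ (-α) *
              Real.exp (c * r ^ p) := by ring
    have hint : IntegrableOn (fun r : ℝ => r ^ (1 - p + -α)) (Set.Ioi 1) := by
      refine Integrable.mono' (h.const_mul c₁⁻¹) ?_ ?_
      · refine ContinuousOn.aestronglyMeasurable ?_ measurableSet_Ioi
        intro r hr
        have hne : r ≠ 0 := by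
          have : (1:ℝ) < r := hr
          positivity
        exact (Real.continuousAt_rpow_const _ _ (Or.inl hne)).continuousWithinAt
      · filter_upwards [ae_restrict_mem measurableSet_Ioi] with r hr
        have hr0 : (0:ℝ) < r := lt_trans one_pos hr
        rw [Real.norm_eq_abs, abs_of_nonneg (Real.rpow_nonneg hr0.le _)]
        have h1 := hbound r hr
        calc r ^ (1 - p + -α) = c₁⁻¹ * (c₁ * r ^ (1 - p + -α)) := by
              field_simp
          _ ≤ c₁⁻¹ * _ := mul_le_mul_of_nonneg_left h1 (inv_nonneg.2 hc₁pos.le)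
    rw [integrableOn_Ioi_rpow_iff zero_lt_one] at hint
    rw [hp_def] at hint
    linarith
  · -- α > 1 - γ/2 → integrable
    intro hα
    have hs : 1 - p + -α < -1 := by rw [hp_def]; linarith
    refine Integrable.mono'
      ((integrableOn_Ioi_rpow_of_lt hs zero_lt_one).const_mul (1 / (c * p) * 2 ^ |α|))
      hmeas ?_
    filter_upwards [ae_restrict_mem measurableSet_Ioi] with r hr
    have hr1 : (1:ℝ) ≤ r := le_of_lt hr
    have hr0 : (0:ℝ) < r := lt_trans one_pos hr
    rw [Real.norm_eq_abs, abs_of_nonneg (hF_nonneg r hr1)]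
    calc (∫ t in Set.Ioi r, Real.exp (-c * t ^ p)) * (1 + r) ^ (-α) * Real.exp (c * r ^ p)
        = ((∫ t in Set.Ioi r, Real.exp (-c * t ^ p)) * Real.exp (c * r ^ p)) *
            ((1 + r) ^ (-α)) := by ring
      _ ≤ (1 / (c * p) * r ^ (1 - p)) * (2 ^ |α| * r ^ (-α)) := by
          refine mul_le_mul (hG_ub r hr1) (hub r hr1)
            (Real.rpow_nonneg (by linarith) _) (by positivity)
      _ = (1 / (c * p) * 2 ^ |α|) * (r ^ (1 - p) * r ^ (-α)) := by ring
      _ = (1 / (c * p) * 2 ^ |α|) * r ^ (1 - p + -α) := by rw [← Real.rpow_add hr0]
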